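/- There is an absolute constant c > 0 such that: if X is a uniform random x-subset of an interval Y of y points, then the probability that there exists a subinterval Z of Y with ||X ∩ Z| - |Z|·x/y| ≥ U is at most 8·exp(-c U²/x). -/

import Mathlib

open scoped Classical
open Finset

namespace Stmt8Aux



lemma exp_le_one_add_add_sq {u : ℝ} (hu : |u| ≤ 1) : Real.exp u ≤ 1 + u + u ^ 2 := by
  have h := Real.exp_bound hu (n := 2) (by norm_num)
  have h2 : ∑ i ∈ Finset.range 2, u ^ i / (Nat.factorial i : ℝ) = 1 + u := by
    simp [Finset.sum_range_succ, Nat.factorial]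
  rw [h2] at h
  have h3 : Real.exp u - (1 + u) ≤ |u| ^ 2 * ((2 : ℕ).succ / ((Nat.factorial 2 : ℝ) * 2)) :=
    le_trans (le_abs_self _) h
  have h4 : |u| ^ 2 * ((2 : ℕ).succ / ((Nat.factorial 2 : ℝ) * 2)) = u ^ 2 * (3 / 4) := by
    rw [sq_abs]; norm_num [Nat.factorial]
  nlinarith [sq_nonneg u]

lemma onestep {p u0 u1 V : ℝ} (hp0 : 0 ≤ p) (hp1 : p ≤ 1)
    (hmean : p * u1 + (1 - p) * u0 = 0) (h1 : |u1| ≤ 1) (h0 : |u0| ≤ 1)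
    (hV : p * u1 ^ 2 + (1 - p) * u0 ^ 2 ≤ V) :
    p * Real.exp u1 + (1 - p) * Real.exp u0 ≤ Real.exp V := by
  have e1 := exp_le_one_add_add_sq h1
  have e0 := exp_le_one_add_add_sq h0
  have hq : 0 ≤ 1 - p := by linarith
  have step : p * Real.exp u1 + (1 - p) * Real.exp u0 ≤ 1 + V := by
    nlinarith [mul_le_mul_of_nonneg_left e1 hp0, mul_le_mul_of_nonneg_left e0 hq]
  calc p * Real.exp u1 + (1 - p) * Real.exp u0 ≤ 1 + V := step
    _ ≤ Real.exp V := by linarith [Real.add_one_le_exp V]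



/-- prefix `[0,j)` inside `Fin y` -/
def Pre (y j : ℕ) : Finset (Fin y) := univ.filter (fun i => (i : ℕ) < j)

/-- prefix count -/
def S (y j : ℕ) (X : Finset (Fin y)) : ℕ := (X ∩ Pre y j).card

noncomputable def M (x y j s : ℕ) : ℝ := ((s : ℝ) * y - j * x) / ((y : ℝ) - j)

lemma card_Pre (y j : ℕ) (hj : j ≤ y) : (Pre y j).card = j := by
  classical
  rw [Pre]
  rw [Finset.card_filter]
  rw [Fin.sum_univ_eq_sum_range (fun i => if i < j then 1 else 0) y]
  have : ∀ i ∈ Finset.range y, (if i < j then (1:ℕ) else 0) = if i ∈ Finset.range j then 1 else 0 := by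
    intro i hi; simp
  rw [Finset.sum_congr rfl this, Finset.sum_ite_mem]
  have : Finset.range y ∩ Finset.range j = Finset.range j := by
    ext i; simp; omega
  simp [this]

lemma inter_Pre (y j : ℕ) (X : Finset (Fin y)) :
    X ∩ Pre y j = X.filter (fun i : Fin y => (i : ℕ) < j) := by
  ext i; simp [Pre, Finset.mem_filter]

lemma cond_card_le (x y j : ℕ) (hj : j ≤ y) (A : Finset (Fin y)) (_hA : A ⊆ Pre y j) :
    (((powersetCard x (univ : Finset (Fin y))).filter
        (fun X => X ∩ Pre y j = A)).card : ℕ)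
      ≤ (y - j).choose (x - A.card) := by
  classical
  have hinj : ∀ X ∈ (powersetCard x (univ : Finset (Fin y))).filter
      (fun X => X ∩ Pre y j = A), X \ A ∈ powersetCard (x - A.card) (univ \ Pre y j) := by
    intro X hX
    rw [Finset.mem_filter] at hX
    obtain ⟨hX1, hX2⟩ := hX
    rw [Finset.mem_powersetCard_univ] at hX1
    have hAX : A ⊆ X := by rw [← hX2]; exact Finset.inter_subset_left
    rw [Finset.mem_powersetCard]
    constructor
    · intro i hi
      rw [Finset.mem_sdiff] at hi ⊢
      refine ⟨Finset.mem_univ i, fun hiP => ?_⟩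
      exact hi.2 (by rw [← hX2]; exact Finset.mem_inter.mpr ⟨hi.1, hiP⟩)
    · rw [Finset.card_sdiff_of_subset hAX, hX1]
  have : (((powersetCard x (univ : Finset (Fin y))).filter
      (fun X => X ∩ Pre y j = A)).card : ℕ)
      ≤ (powersetCard (x - A.card) (univ \ Pre y j)).card := by
    apply Finset.card_le_card_of_injOn (fun X => X \ A) hinj
    intro X1 h1 X2 h2 he
    rw [Finset.coe_filter] at h1 h2
    simp only [Set.mem_setOf_eq] at h1 h2
    have hA1 : A ⊆ X1 := by rw [← h1.2]; exact Finset.inter_subset_left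
    have hA2 : A ⊆ X2 := by rw [← h2.2]; exact Finset.inter_subset_left
    have := congrArg (fun s => s ∪ A) he
    simpa [Finset.sdiff_union_of_subset hA1, Finset.sdiff_union_of_subset hA2] using this
  refine le_trans this ?_
  rw [Finset.card_powersetCard]
  rw [Finset.card_sdiff_of_subset (Finset.subset_univ _), Finset.card_univ, Fintype.card_fin,
    card_Pre y j hj]

lemma mart {x y : ℕ} (j s : ℕ) (h : j + 1 < y) :
    ((x : ℝ) - s) / ((y : ℝ) - j) * M x y (j + 1) (s + 1)
      + (1 - ((x : ℝ) - s) / ((y : ℝ) - j)) * M x y (j + 1) s = M x y j s := by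
  have h1 : (y : ℝ) - j ≠ 0 := by
    have : (j : ℝ) < y := by exact_mod_cast Nat.lt_of_succ_lt h
    linarith
  have h2 : (y : ℝ) - (j + 1) ≠ 0 := by
    have : ((j : ℝ) + 1) < y := by exact_mod_cast h
    linarith
  rw [M, M, M]
  push_cast
  field_simp
  ring

lemma gap {x y : ℕ} (j s : ℕ) (h : j + 1 < y) :
    M x y (j + 1) (s + 1) - M x y (j + 1) s = (y : ℝ) / ((y : ℝ) - (j + 1)) := by
  have h2 : (y : ℝ) - (j + 1) ≠ 0 := by
    have : ((j : ℝ) + 1) < y := by exact_mod_cast h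
    linarith
  rw [M, M]
  push_cast
  field_simp
  ring

lemma M_self (x y j : ℕ) (h : j < y) : M x y j x = x := by
  have h1 : (y : ℝ) - j ≠ 0 := by
    have : (j : ℝ) < y := by exact_mod_cast h
    linarith
  rw [M, div_eq_iff h1]; ring

/-- The stopped case: conditional count is at most the conditional total. -/
lemma stop_case (x y j : ℕ) (hj : j ≤ y) (A : Finset (Fin y)) (hA : A ⊆ Pre y j)
    (σ t lam : ℝ) (hlam : 0 < lam) (hstop : t ≤ σ * M x y j A.card) (Q : ℝ) (hQ : 0 ≤ Q)
    (pr : Finset (Fin y) → Prop) :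
    (((powersetCard x (univ : Finset (Fin y))).filter
        (fun X => X ∩ Pre y j = A ∧ pr X)).card : ℝ)
      ≤ Real.exp (lam * (σ * M x y j A.card) - lam * t + Q)
          * ((y - j).choose (x - A.card)) := by
  have h1 : (((powersetCard x (univ : Finset (Fin y))).filter
      (fun X => X ∩ Pre y j = A ∧ pr X)).card : ℕ)
      ≤ (y - j).choose (x - A.card) := by
    refine le_trans (Finset.card_le_card (Finset.monotone_filter_right _ ?_)) (cond_card_le x y j hj A hA)
    exact fun X _ h => h.1
  have h2 : (1 : ℝ) ≤ Real.exp (lam * (σ * M x y j A.card) - lam * t + Q) := by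
    rw [← Real.exp_zero]
    apply Real.exp_le_exp.mpr
    have : 0 ≤ lam * (σ * M x y j A.card - t) := mul_nonneg hlam.le (by linarith)
    nlinarith
  calc (((powersetCard x (univ : Finset (Fin y))).filter
      (fun X => X ∩ Pre y j = A ∧ pr X)).card : ℝ)
      ≤ ((y - j).choose (x - A.card) : ℝ) := by exact_mod_cast h1
    _ ≤ _ := le_mul_of_one_le_left (Nat.cast_nonneg _) h2


/-- pure-real one-step combination -/
lemma generic_alg {t lam σ Mj M1 M0 p g v dd C C1 C2 : ℝ}
    (hσ : σ = 1 ∨ σ = -1) (hlam : 0 < lam) (hlam3 : lam * 3 ≤ 1)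
    (hp0 : 0 ≤ p) (hp1 : p ≤ 1) (hg0 : 0 ≤ g) (hg3 : g ≤ 3)
    (hv0 : 0 ≤ v) (hpv : p * 9 ≤ v)
    (hmart : p * M1 + (1 - p) * M0 = Mj) (hgap : M1 - M0 = g)
    (hC : 0 ≤ C) (hC1 : C1 = p * C) (hC2 : C2 = (1 - p) * C) :
    Real.exp (lam * (σ * M1) - lam * t + lam ^ 2 * v * dd) * C1
      + Real.exp (lam * (σ * M0) - lam * t + lam ^ 2 * v * dd) * C2
    ≤ Real.exp (lam * (σ * Mj) - lam * t + lam ^ 2 * v * dd + lam ^ 2 * v) * C := by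
  have hd1 : M1 - Mj = (1 - p) * g := by linear_combination (1 - p) * hgap + hmart
  have hd0 : M0 - Mj = -(p * g) := by linear_combination hmart - p * hgap
  have hσ1 : |σ| = 1 := by rcases hσ with rfl | rfl <;> norm_num
  have hσ2 : σ ^ 2 = 1 := by rcases hσ with rfl | rfl <;> norm_num
  set u1 : ℝ := lam * σ * (M1 - Mj) with hu1def
  set u0 : ℝ := lam * σ * (M0 - Mj) with hu0def
  have habs1 : |u1| ≤ 1 := by
    rw [hu1def, abs_mul, abs_mul, abs_of_pos hlam, hσ1, hd1,
      abs_of_nonneg (mul_nonneg (by linarith) hg0)]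
    nlinarith [mul_le_mul_of_nonneg_left hg3 hlam.le,
      mul_nonneg (mul_nonneg hlam.le hp0) hg0]
  have habs0 : |u0| ≤ 1 := by
    rw [hu0def, abs_mul, abs_mul, abs_of_pos hlam, hσ1, hd0, abs_neg,
      abs_of_nonneg (mul_nonneg hp0 hg0)]
    nlinarith [mul_le_mul_of_nonneg_left hg3 hlam.le,
      mul_nonneg (mul_nonneg hlam.le hg0) (by linarith : (0:ℝ) ≤ 1 - p)]
  have hmean : p * u1 + (1 - p) * u0 = 0 := by
    rw [hu1def, hu0def]
    linear_combination (lam * σ * p) * hd1 + (lam * σ * (1 - p)) * hd0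
  have hu1sq : u1 ^ 2 = lam ^ 2 * ((1 - p) * g) ^ 2 := by
    rw [hu1def, hd1, mul_pow, mul_pow, hσ2]; ring
  have hu0sq : u0 ^ 2 = lam ^ 2 * (p * g) ^ 2 := by
    rw [hu0def, hd0, mul_pow, mul_pow, hσ2]; ring_nf
  have hvar : p * u1 ^ 2 + (1 - p) * u0 ^ 2 ≤ lam ^ 2 * v := by
    have hsum : p * u1 ^ 2 + (1 - p) * u0 ^ 2 = lam ^ 2 * (g ^ 2 * (p * (1 - p))) := by
      rw [hu1sq, hu0sq]; ring
    rw [hsum]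
    have hq0 : 0 ≤ p * (1 - p) := mul_nonneg hp0 (by linarith)
    have hqp : p * (1 - p) ≤ p := by nlinarith
    have hgsq : g ^ 2 ≤ 9 := by nlinarith
    have h2 : g ^ 2 * (p * (1 - p)) ≤ v :=
      calc g ^ 2 * (p * (1 - p)) ≤ 9 * (p * (1 - p)) := mul_le_mul_of_nonneg_right hgsq hq0
        _ ≤ 9 * p := by linarith
        _ ≤ v := by linarith [hpv]
    exact mul_le_mul_of_nonneg_left h2 (sq_nonneg lam)
  have honestep := onestep hp0 hp1 hmean habs1 habs0 hvar
  have hE1 : Real.exp (lam * (σ * M1) - lam * t + lam ^ 2 * v * dd)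
      = Real.exp u1 * Real.exp (lam * (σ * Mj) - lam * t + lam ^ 2 * v * dd) := by
    rw [← Real.exp_add]; congr 1; rw [hu1def]; ring
  have hE0 : Real.exp (lam * (σ * M0) - lam * t + lam ^ 2 * v * dd)
      = Real.exp u0 * Real.exp (lam * (σ * Mj) - lam * t + lam ^ 2 * v * dd) := by
    rw [← Real.exp_add]; congr 1; rw [hu0def]; ring
  set R : ℝ := Real.exp (lam * (σ * Mj) - lam * t + lam ^ 2 * v * dd) with hRdef
  have hCR : (0 : ℝ) ≤ C * R := mul_nonneg hC (Real.exp_pos _).le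
  calc Real.exp (lam * (σ * M1) - lam * t + lam ^ 2 * v * dd) * C1
      + Real.exp (lam * (σ * M0) - lam * t + lam ^ 2 * v * dd) * C2
      = (C * R) * (p * Real.exp u1 + (1 - p) * Real.exp u0) := by
        rw [hC1, hC2, hE1, hE0]; ring
    _ ≤ (C * R) * Real.exp (lam ^ 2 * v) := mul_le_mul_of_nonneg_left honestep hCR
    _ = _ := by
      have h : Real.exp (lam * (σ * Mj) - lam * t + lam ^ 2 * v * dd + lam ^ 2 * v)
          = R * Real.exp (lam ^ 2 * v) := by rw [hRdef, ← Real.exp_add]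
      rw [h]; ring

set_option maxHeartbeats 2000000 in
lemma main_ind (x y : ℕ) (hx : 0 < x) (hxy : x ≤ y) (hy : 2 ≤ y)
    (σ : ℝ) (hσ : σ = 1 ∨ σ = -1) (t lam : ℝ) (ht : 0 < t) (hlam : 0 < lam)
    (hlam3 : lam * 3 ≤ 1) :
    ∀ d j, j + d = (y + 1) / 2 → ∀ A : Finset (Fin y), A ⊆ Pre y j → A.card ≤ x →
      x - A.card ≤ y - j →
      (((powersetCard x (univ : Finset (Fin y))).filter
          (fun X => X ∩ Pre y j = A ∧ ∃ k, j ≤ k ∧ k ≤ (y + 1) / 2 ∧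
            t ≤ σ * M x y k (S y k X))).card : ℝ)
        ≤ Real.exp (lam * (σ * M x y j A.card) - lam * t + lam ^ 2 * (18 * x / y) * d)
            * (((y - j).choose (x - A.card) : ℕ) : ℝ) := by
  have hv0 : (0 : ℝ) ≤ 18 * x / y := by positivity
  intro d
  induction d with
  | zero =>
    intro j hjd A hA ha hm
    have hjy : j ≤ y := by omega
    by_cases hstop : t ≤ σ * M x y j A.card
    · exact stop_case x y j hjy A hA σ t lam hlam hstop _ (by positivity) _
    · have : ((powersetCard x (univ : Finset (Fin y))).filter
          (fun X => X ∩ Pre y j = A ∧ ∃ k, j ≤ k ∧ k ≤ (y + 1) / 2 ∧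
            t ≤ σ * M x y k (S y k X))) = ∅ := by
        apply Finset.filter_false_of_mem
        rintro X hX ⟨hc, k, hk1, hk2, hk3⟩
        have hkj : k = j := by omega
        subst hkj
        have : S y k X = A.card := by rw [S, hc]
        rw [this] at hk3
        exact hstop hk3
      rw [this]
      simp only [Finset.card_empty, Nat.cast_zero]
      positivity
  | succ d ih =>
    intro j hjd A hA ha hm
    have hjy : j ≤ y := by omega
    by_cases hstop : t ≤ σ * M x y j A.card
    · exact stop_case x y j hjy A hA σ t lam hlam hstop _ (by positivity) _
    have hjK : j < (y + 1) / 2 := by omega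
    have hj1y : j + 1 < y := by omega
    have hj1K : j + 1 + d = (y + 1) / 2 := by omega
    set K := (y + 1) / 2 with hK
    set j' : Fin y := ⟨j, by omega⟩ with hj'
    have hj'P : j' ∉ Pre y j := by simp [Pre, hj']
    have hj'A : j' ∉ A := fun h => hj'P (hA h)
    have hPsub : Pre y j ⊆ Pre y (j + 1) := by
      intro i hi; simp only [Pre, Finset.mem_filter, Finset.mem_univ, true_and] at hi ⊢; omega
    have hj'P1 : j' ∈ Pre y (j + 1) := by simp [Pre, hj']
    -- set splitting
    have key : ∀ X : Finset (Fin y), X ∈ powersetCard x (univ : Finset (Fin y)) →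
        ((X ∩ Pre y j = A ∧ ∃ k, j ≤ k ∧ k ≤ K ∧ t ≤ σ * M x y k (S y k X)) ↔
         ((X ∩ Pre y (j+1) = insert j' A ∧ ∃ k, j+1 ≤ k ∧ k ≤ K ∧ t ≤ σ * M x y k (S y k X)) ∨
          (X ∩ Pre y (j+1) = A ∧ ∃ k, j+1 ≤ k ∧ k ≤ K ∧ t ≤ σ * M x y k (S y k X)))) := by
      intro X _
      constructor
      · rintro ⟨hc, k, hk1, hk2, hk3⟩
        have hk1' : j + 1 ≤ k := by
          rcases Nat.eq_or_lt_of_le hk1 with h | h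
          · exfalso; subst h; apply hstop
            have hs : S y j X = A.card := by rw [S, hc]
            rwa [hs] at hk3
          · omega
        have hcases : X ∩ Pre y (j + 1) = insert j' A ∨ X ∩ Pre y (j + 1) = A := by
          by_cases hjX : j' ∈ X
          · left; ext i
            simp only [Finset.mem_inter, Finset.mem_insert]
            constructor
            · rintro ⟨hiX, hiP⟩
              simp only [Pre, Finset.mem_filter, Finset.mem_univ, true_and] at hiP
              rcases Nat.lt_succ_iff_lt_or_eq.mp hiP with h | h
              · right; rw [← hc]; exact Finset.mem_inter.mpr ⟨hiX, by
                  simp only [Pre, Finset.mem_filter, Finset.mem_univ, true_and]; exact h⟩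
              · left; exact Fin.ext (show i.val = j'.val from h)
            · rintro (rfl | hiA)
              · exact ⟨hjX, hj'P1⟩
              · have := Finset.mem_inter.mp (hc ▸ hiA : i ∈ X ∩ Pre y j)
                exact ⟨this.1, hPsub this.2⟩
          · right; ext i
            simp only [Finset.mem_inter]
            constructor
            · rintro ⟨hiX, hiP⟩
              simp only [Pre, Finset.mem_filter, Finset.mem_univ, true_and] at hiP
              rcases Nat.lt_succ_iff_lt_or_eq.mp hiP with h | h
              · rw [← hc]; exact Finset.mem_inter.mpr ⟨hiX, by
                  simp only [Pre, Finset.mem_filter, Finset.mem_univ, true_and]; exact h⟩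
              · exact absurd ((Fin.ext (show i.val = j'.val from h) : i = j') ▸ hiX) hjX
            · intro hiA
              have := Finset.mem_inter.mp (hc ▸ hiA : i ∈ X ∩ Pre y j)
              exact ⟨this.1, hPsub this.2⟩
        rcases hcases with h | h
        · exact Or.inl ⟨h, k, hk1', hk2, hk3⟩
        · exact Or.inr ⟨h, k, hk1', hk2, hk3⟩
      · have hback : ∀ B : Finset (Fin y), B ∩ Pre y j = A →
            X ∩ Pre y (j+1) = B → X ∩ Pre y j = A := by
          intro B hB hXB
          have : X ∩ Pre y j = (X ∩ Pre y (j+1)) ∩ Pre y j := by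
            rw [Finset.inter_assoc]
            congr 1
            exact (Finset.inter_eq_right.mpr hPsub).symm
          rw [this, hXB, hB]
        rintro (⟨hc, k, hk1, hk2, hk3⟩ | ⟨hc, k, hk1, hk2, hk3⟩)
        · refine ⟨hback _ ?_ hc, k, by omega, hk2, hk3⟩
          rw [Finset.insert_inter_of_notMem hj'P]
          exact Finset.inter_eq_left.mpr hA
        · refine ⟨hback _ (Finset.inter_eq_left.mpr hA) hc, k, by omega, hk2, hk3⟩
    have hsplit : ((powersetCard x (univ : Finset (Fin y))).filter
          (fun X => X ∩ Pre y j = A ∧ ∃ k, j ≤ k ∧ k ≤ K ∧ t ≤ σ * M x y k (S y k X)))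
        = ((powersetCard x (univ : Finset (Fin y))).filter
          (fun X => X ∩ Pre y (j+1) = insert j' A ∧ ∃ k, j+1 ≤ k ∧ k ≤ K ∧ t ≤ σ * M x y k (S y k X)))
        ∪ ((powersetCard x (univ : Finset (Fin y))).filter
          (fun X => X ∩ Pre y (j+1) = A ∧ ∃ k, j+1 ≤ k ∧ k ≤ K ∧ t ≤ σ * M x y k (S y k X))) := by
      ext X
      simp only [Finset.mem_union, Finset.mem_filter]
      constructor
      · rintro ⟨hX, hP⟩
        rcases (key X hX).mp hP with h | h
        · exact Or.inl ⟨hX, h⟩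
        · exact Or.inr ⟨hX, h⟩
      · rintro (⟨hX, hP⟩ | ⟨hX, hP⟩)
        · exact ⟨hX, (key X hX).mpr (Or.inl hP)⟩
        · exact ⟨hX, (key X hX).mpr (Or.inr hP)⟩
    have hdisj : Disjoint
        ((powersetCard x (univ : Finset (Fin y))).filter
          (fun X => X ∩ Pre y (j+1) = insert j' A ∧ ∃ k, j+1 ≤ k ∧ k ≤ K ∧ t ≤ σ * M x y k (S y k X)))
        ((powersetCard x (univ : Finset (Fin y))).filter
          (fun X => X ∩ Pre y (j+1) = A ∧ ∃ k, j+1 ≤ k ∧ k ≤ K ∧ t ≤ σ * M x y k (S y k X))) := by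
      rw [Finset.disjoint_left]
      rintro X h1 h2
      rw [Finset.mem_filter] at h1 h2
      have : insert j' A = A := by rw [← h1.2.1, h2.2.1]
      exact hj'A (this ▸ Finset.mem_insert_self j' A)
    rw [hsplit, Finset.card_union_of_disjoint hdisj]
    by_cases hm0 : x - A.card = 0
    · -- A.card = x : left branch empty
      have hax : A.card = x := by omega
      have h1e : ((powersetCard x (univ : Finset (Fin y))).filter
          (fun X => X ∩ Pre y (j+1) = insert j' A ∧ ∃ k, j+1 ≤ k ∧ k ≤ K ∧
            t ≤ σ * M x y k (S y k X))) = ∅ := by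
        apply Finset.filter_false_of_mem
        rintro X hX ⟨hc, -⟩
        rw [Finset.mem_powersetCard_univ] at hX
        have hsub : insert j' A ⊆ X := by rw [← hc]; exact Finset.inter_subset_left
        have hcard := Finset.card_le_card hsub
        rw [Finset.card_insert_of_notMem hj'A, hX, hax] at hcard
        omega
      rw [h1e]
      simp only [Finset.card_empty, Nat.cast_zero, zero_add]
      have ihA := ih (j+1) hj1K A (hA.trans hPsub) ha (by omega)
      refine le_trans ihA ?_
      have hMeq : M x y (j+1) A.card = M x y j A.card := by
        rw [hax, M_self x y (j+1) (by omega), M_self x y j (by omega)]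
      rw [hMeq]
      have hc1 : (y - (j+1)).choose (x - A.card) = 1 := by rw [hm0]; exact Nat.choose_zero_right _
      have hc2 : (y - j).choose (x - A.card) = 1 := by rw [hm0]; exact Nat.choose_zero_right _
      rw [hc1, hc2]
      simp only [Nat.cast_one, mul_one]
      apply Real.exp_le_exp.mpr
      push_cast
      nlinarith [mul_nonneg (sq_nonneg lam) hv0]
    by_cases hmn : x - A.card = y - j
    · -- p = 1 : right branch empty
      have h2e : ((powersetCard x (univ : Finset (Fin y))).filter
          (fun X => X ∩ Pre y (j+1) = A ∧ ∃ k, j+1 ≤ k ∧ k ≤ K ∧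
            t ≤ σ * M x y k (S y k X))) = ∅ := by
        apply Finset.filter_false_of_mem
        rintro X hX ⟨hc, -⟩
        rw [Finset.mem_powersetCard_univ] at hX
        have h1 : X.card = (X ∩ Pre y (j+1)).card + (X \ Pre y (j+1)).card :=
          (Finset.card_inter_add_card_sdiff X (Pre y (j+1))).symm
        have h2 : (X \ Pre y (j+1)).card ≤ (univ \ Pre y (j+1)).card :=
          Finset.card_le_card (Finset.sdiff_subset_sdiff (Finset.subset_univ X) le_rfl)
        rw [Finset.card_sdiff_of_subset (Finset.subset_univ _), Finset.card_univ, Fintype.card_fin,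
          card_Pre y (j+1) (by omega)] at h2
        rw [hX, hc] at h1
        omega
      rw [h2e]
      simp only [Finset.card_empty, Nat.cast_zero, add_zero]
      have ih1 := ih (j+1) hj1K (insert j' A) (Finset.insert_subset hj'P1 (hA.trans hPsub))
        (by rw [Finset.card_insert_of_notMem hj'A]; omega)
        (by rw [Finset.card_insert_of_notMem hj'A]; omega)
      rw [Finset.card_insert_of_notMem hj'A] at ih1
      refine le_trans ih1 ?_
      have hjR : ((j:ℝ)) < y := by exact_mod_cast (by omega : j < y)
      have hyjne : ((y:ℝ) - j) ≠ 0 := by linarith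
      have hcast_m : ((x:ℝ) - A.card) = ((y:ℝ) - j) := by
        have h := congrArg (fun n : ℕ => (n : ℝ)) hmn
        rwa [Nat.cast_sub ha, Nat.cast_sub hjy] at h
      have hp1' : ((x:ℝ) - A.card) / ((y:ℝ) - j) = 1 := by rw [hcast_m]; exact div_self hyjne
      have hMeq : M x y (j+1) (A.card+1) = M x y j A.card := by
        have hmm := mart (x := x) (y := y) j A.card hj1y
        rw [hp1'] at hmm
        simpa using hmm
      rw [hMeq]
      have hc1 : (y - (j+1)).choose (x - (A.card+1)) = 1 := by
        have hxx : x - (A.card + 1) = y - (j+1) := by omega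
        rw [hxx]; exact Nat.choose_self _
      have hc2 : (y - j).choose (x - A.card) = 1 := by rw [hmn]; exact Nat.choose_self _
      rw [hc1, hc2]
      simp only [Nat.cast_one, mul_one]
      apply Real.exp_le_exp.mpr
      push_cast
      nlinarith [mul_nonneg (sq_nonneg lam) hv0]
    -- generic case
    have hm1 : 1 ≤ x - A.card := by omega
    have hmlt : x - A.card < y - j := by omega
    have ih1 := ih (j+1) hj1K (insert j' A) (Finset.insert_subset hj'P1 (hA.trans hPsub))
      (by rw [Finset.card_insert_of_notMem hj'A]; omega)
      (by rw [Finset.card_insert_of_notMem hj'A]; omega)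
    rw [Finset.card_insert_of_notMem hj'A] at ih1
    have ih2 := ih (j+1) hj1K A (hA.trans hPsub) ha (by omega)
    have ej : y - (j+1) = y - j - 1 := by omega
    have ea : x - (A.card+1) = x - A.card - 1 := by omega
    rw [ej, ea] at ih1
    rw [ej] at ih2
    push_cast
    refine le_trans (add_le_add ih1 ih2) ?_
    clear ih ih1 ih2 key hsplit hdisj hstop
    -- nat choose identities
    have e1 : y - j - 1 + 1 = y - j := by omega
    have e2 : x - A.card - 1 + 1 = x - A.card := by omega
    have id1 : (y - j) * ((y - j - 1).choose (x - A.card - 1))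
        = (y - j).choose (x - A.card) * (x - A.card) := by
      have h := Nat.add_one_mul_choose_eq (y - j - 1) (x - A.card - 1)
      rwa [e1, e2] at h
    have id2 : (y - j).choose (x - A.card)
        = (y - j - 1).choose (x - A.card - 1) + (y - j - 1).choose (x - A.card) := by
      have h := Nat.choose_succ_succ' (y - j - 1) (x - A.card - 1)
      rwa [e1, e2] at h
    -- real facts
    have hjR : ((j:ℝ)) < y := by exact_mod_cast (by omega : j < y)
    have hj1R : ((j:ℝ) + 1) < y := by exact_mod_cast hj1y
    have hyjpos : (0:ℝ) < (y:ℝ) - j := by linarith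
    have hyj1pos : (0:ℝ) < (y:ℝ) - (j+1) := by push_cast; linarith
    have hy0 : (0:ℝ) < y := by positivity
    have hxaR : ((x - A.card : ℕ) : ℝ) = (x:ℝ) - A.card := by rw [Nat.cast_sub ha]
    have hyjR' : ((y - j : ℕ) : ℝ) = (y:ℝ) - j := by rw [Nat.cast_sub hjy]
    set p : ℝ := ((x:ℝ) - A.card) / ((y:ℝ) - j) with hpdef
    set g : ℝ := (y:ℝ) / ((y:ℝ) - (j+1)) with hgdef
    have hmart := mart (x := x) (y := y) j A.card hj1y
    have hgap := gap (x := x) (y := y) j A.card hj1y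
    rw [← hpdef] at hmart
    rw [← hgdef] at hgap
    have hmR : (0:ℝ) ≤ (x:ℝ) - A.card := by rw [← hxaR]; positivity
    have hp0 : 0 ≤ p := div_nonneg hmR hyjpos.le
    have hp1 : p ≤ 1 := by
      rw [hpdef, div_le_one hyjpos]
      have h := (Nat.cast_le (α := ℝ)).mpr hm
      rwa [hxaR, hyjR'] at h
    have hp2x : p ≤ 2 * x / y := by
      rw [hpdef, div_le_div_iff₀ hyjpos hy0]
      have h2j : 2 * j ≤ y := by omega
      have h2jR : (2:ℝ) * j ≤ y := by exact_mod_cast h2j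
      have hAc : (0:ℝ) ≤ (A.card : ℝ) := Nat.cast_nonneg _
      have hxR : (0:ℝ) ≤ (x:ℝ) := Nat.cast_nonneg _
      have k1 : ((x:ℝ) - A.card) * y ≤ (x:ℝ) * y := by nlinarith [mul_nonneg hAc hy0.le]
      have k2 : (x:ℝ) * y ≤ 2 * x * ((y:ℝ) - j) := by
        nlinarith [mul_nonneg hxR (by linarith : (0:ℝ) ≤ 2 * ((y:ℝ) - j) - y)]
      linarith
    have hpv : p * 9 ≤ 18 * x / y := by
      have : (2:ℝ) * x / y * 9 = 18 * x / y := by ring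
      nlinarith
    have hg0 : 0 ≤ g := div_nonneg hy0.le hyj1pos.le
    have hg3 : g ≤ 3 := by
      rw [hgdef, div_le_iff₀ hyj1pos]
      have hnat : y ≤ 3 * (y - (j+1)) := by omega
      have hr : (y:ℝ) ≤ 3 * ((y:ℝ) - (j+1)) := by
        have h := (Nat.cast_le (α := ℝ)).mpr hnat
        rw [Nat.cast_mul, Nat.cast_sub (by omega : j + 1 ≤ y)] at h
        push_cast at h ⊢
        linarith
      linarith
    -- choose ratio identities (real)
    have idR : ((y - j : ℕ):ℝ) * ((y - j - 1).choose (x - A.card - 1) : ℝ)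
        = ((y - j).choose (x - A.card) : ℝ) * ((x - A.card : ℕ):ℝ) := by
      exact_mod_cast id1
    have hc1R : ((y - j - 1).choose (x - A.card - 1) : ℝ)
        = p * ((y - j).choose (x - A.card) : ℝ) := by
      rw [hpdef, div_mul_eq_mul_div, eq_div_iff (ne_of_gt hyjpos)]
      rw [← hxaR, ← hyjR']
      linear_combination idR
    have hc2R : ((y - j - 1).choose (x - A.card) : ℝ)
        = (1 - p) * ((y - j).choose (x - A.card) : ℝ) := by
      have idR2 : ((y - j).choose (x - A.card) : ℝ)
          = ((y - j - 1).choose (x - A.card - 1) : ℝ) + ((y - j - 1).choose (x - A.card) : ℝ) := by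
        exact_mod_cast id2
      rw [hc1R] at idR2
      linarith
    have halg := generic_alg (t := t) (lam := lam) (σ := σ) (Mj := M x y j A.card)
      (M1 := M x y (j+1) (A.card+1)) (M0 := M x y (j+1) A.card) (p := p) (g := g)
      (v := 18 * x / y) (dd := (d : ℝ))
      (C := ((y - j).choose (x - A.card) : ℝ))
      (C1 := ((y - j - 1).choose (x - A.card - 1) : ℝ))
      (C2 := ((y - j - 1).choose (x - A.card) : ℝ))
      hσ hlam hlam3 hp0 hp1 hg0 hg3 hv0 hpv hmart hgap (Nat.cast_nonneg _) hc1R hc2R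
    refine le_trans halg ?_
    apply mul_le_mul_of_nonneg_right _ (Nat.cast_nonneg _)
    apply Real.exp_le_exp.mpr
    ring_nf
    exact le_refl _





/-- reversal: prefix count of reversed set -/
lemma S_rev (x y k : ℕ) (hk : k ≤ y) (X : Finset (Fin y)) (hX : X.card = x) :
    S y k (X.image Fin.rev) = x - S y (y - k) X ∧ S y (y - k) X ≤ x := by
  have hSle : S y (y - k) X ≤ x := by
    rw [S, ← hX]; exact Finset.card_le_card Finset.inter_subset_left
  refine ⟨?_, hSle⟩
  have him : X.image Fin.rev ∩ Pre y k
      = (X.filter (fun i : Fin y => y - k ≤ (i : ℕ))).image Fin.rev := by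
    ext z
    simp only [Finset.mem_inter, Finset.mem_image, Finset.mem_filter, Pre,
      Finset.mem_univ, true_and]
    constructor
    · rintro ⟨⟨i, hiX, rfl⟩, hz⟩
      refine ⟨i, ⟨hiX, ?_⟩, rfl⟩
      have hi := i.isLt
      have hz' : (Fin.rev i : ℕ) < k := hz
      rw [Fin.val_rev] at hz'
      omega
    · rintro ⟨i, ⟨hiX, hik⟩, rfl⟩
      refine ⟨⟨i, hiX, rfl⟩, ?_⟩
      show (Fin.rev i : ℕ) < k
      have hi := i.isLt
      rw [Fin.val_rev]
      omega
  rw [S, him, Finset.card_image_of_injective _ Fin.rev_injective]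
  have hsplit := Finset.card_filter_add_card_filter_not
    (s := X) (p := fun i : Fin y => (i : ℕ) < y - k)
  have hS : S y (y - k) X = (X.filter (fun i : Fin y => (i : ℕ) < y - k)).card := by
    rw [S]
    congr 1
    ext i; simp [Pre]
  have hneg : (X.filter (fun i : Fin y => ¬ (i : ℕ) < y - k)).card
      = (X.filter (fun i : Fin y => y - k ≤ (i : ℕ))).card := by
    congr 1; ext i; simp [not_lt]
  omega

/-- counting is invariant under reversal -/
lemma card_filter_rev (x y : ℕ) (Q : Finset (Fin y) → Prop) :
    (((powersetCard x (univ : Finset (Fin y))).filter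
        (fun X => Q (X.image Fin.rev))).card)
      = ((powersetCard x (univ : Finset (Fin y))).filter Q).card := by
  have hrevrev : ∀ X : Finset (Fin y), (X.image Fin.rev).image Fin.rev = X := by
    intro X
    rw [Finset.image_image]
    have : (Fin.rev ∘ Fin.rev : Fin y → Fin y) = id := by
      funext i; simp [Function.comp, Fin.rev_rev]
    rw [this, Finset.image_id]
  apply Finset.card_nbij' (fun X => X.image Fin.rev) (fun X => X.image Fin.rev)
  · intro X hX
    rw [Finset.mem_coe, Finset.mem_filter] at hX ⊢
    rw [Finset.mem_powersetCard_univ] at hX ⊢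
    exact ⟨by rw [Finset.card_image_of_injective _ Fin.rev_injective, hX.1], hX.2⟩
  · intro X hX
    rw [Finset.mem_coe, Finset.mem_filter] at hX ⊢
    rw [Finset.mem_powersetCard_univ] at hX ⊢
    refine ⟨by rw [Finset.card_image_of_injective _ Fin.rev_injective, hX.1], ?_⟩
    rw [hrevrev]; exact hX.2
  · intro X _; exact hrevrev X
  · intro X _; exact hrevrev X

/-- from a prefix deviation to a hit of the normalized process -/
lemma hit_of_D (x y k : ℕ) (hk : k ≤ (y + 1) / 2) (hy : 2 ≤ y)
    (c σ : ℝ) (hc : 0 < c) (S' : ℕ) (h : c ≤ σ * ((S' : ℝ) - k * x / y)) :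
    c ≤ σ * M x y k S' := by
  have hky : k < y := by omega
  have hkR : (k : ℝ) < y := by exact_mod_cast hky
  have hy0 : (0 : ℝ) < y := by positivity
  have hykpos : (0 : ℝ) < (y : ℝ) - k := by linarith
  have hM : M x y k S' = ((S' : ℝ) - k * x / y) * ((y : ℝ) / ((y : ℝ) - k)) := by
    rw [M]
    field_simp
  rw [hM]
  have hf1 : (1 : ℝ) ≤ (y : ℝ) / ((y : ℝ) - k) := by
    rw [le_div_iff₀ hykpos]; linarith [Nat.cast_nonneg (α := ℝ) k]
  have hσD : c ≤ σ * ((S' : ℝ) - k * x / y) := h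
  nlinarith [mul_le_mul_of_nonneg_left hf1 (le_of_lt (lt_of_lt_of_le hc hσD))]


def Hit (x y : ℕ) (t σ : ℝ) (X : Finset (Fin y)) : Prop :=
  ∃ k, k ≤ (y + 1) / 2 ∧ t ≤ σ * M x y k (S y k X)

lemma event_implies (x y : ℕ) (hx : 0 < x) (hxy : x ≤ y) (hy : 2 ≤ y) (U : ℝ) (hU : 0 < U)
    (X : Finset (Fin y)) (hX : X.card = x)
    (hev : ∃ a b : Fin y, U ≤ |((X ∩ Finset.Icc a b).card : ℝ) -
        ((Finset.Icc a b).card : ℝ) * (x : ℝ) / (y : ℝ)|) :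
    Hit x y (U/2) 1 X ∨ Hit x y (U/2) (-1) X ∨
      Hit x y (U/2) 1 (X.image Fin.rev) ∨ Hit x y (U/2) (-1) (X.image Fin.rev) := by
  have hU2 : 0 < U / 2 := by linarith
  -- main step: a prefix deviation at any k ≤ y yields the conclusion
  have main : ∀ k, k ≤ y → U / 2 ≤ |(S y k X : ℝ) - k * (x : ℝ) / y| →
      Hit x y (U/2) 1 X ∨ Hit x y (U/2) (-1) X ∨
      Hit x y (U/2) 1 (X.image Fin.rev) ∨ Hit x y (U/2) (-1) (X.image Fin.rev) := by
    intro k hky hk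
    have hrev : k > (y + 1) / 2 →
        ((S y (y - k) (X.image Fin.rev) : ℝ) - (y - k : ℕ) * (x : ℝ) / y)
          = -(((S y k X : ℝ) - k * (x : ℝ) / y)) := by
      intro hkK
      obtain ⟨hSrev, hSle⟩ := S_rev x y (y - k) (by omega) X hX
      have hyk' : y - (y - k) = k := by omega
      rw [hyk'] at hSrev hSle
      rw [hSrev]
      have h1 : ((x - S y k X : ℕ) : ℝ) = (x : ℝ) - S y k X := by
        exact Nat.cast_sub hSle
      have h2 : ((y - k : ℕ) : ℝ) = (y : ℝ) - k := by
        exact Nat.cast_sub hky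
      rw [h1, h2]
      have hy0 : ((y : ℝ)) ≠ 0 := by positivity
      field_simp
      ring
    rcases le_abs.mp hk with hpos | hneg
    · by_cases hkK : k ≤ (y + 1) / 2
      · exact Or.inl ⟨k, hkK, hit_of_D x y k hkK hy _ 1 hU2 _ (by rw [one_mul]; exact hpos)⟩
      · refine Or.inr (Or.inr (Or.inr ⟨y - k, by omega, ?_⟩))
        refine hit_of_D x y (y - k) (by omega) hy _ (-1) hU2 _ ?_
        rw [hrev (by omega)]
        linarith
    · by_cases hkK : k ≤ (y + 1) / 2
      · refine Or.inr (Or.inl ⟨k, hkK, ?_⟩)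
        exact hit_of_D x y k hkK hy _ (-1) hU2 _ (by rw [neg_one_mul]; exact hneg)
      · refine Or.inr (Or.inr (Or.inl ⟨y - k, by omega, ?_⟩))
        refine hit_of_D x y (y - k) (by omega) hy _ 1 hU2 _ ?_
        rw [one_mul, hrev (by omega)]
        linarith
  -- extract the deviation
  obtain ⟨a, b, hab⟩ := hev
  by_cases hba : b < a
  · exfalso
    rw [Finset.Icc_eq_empty (not_le.mpr hba)] at hab
    simp at hab
    linarith
  push_neg at hba
  have hk12 : (a : ℕ) < (b : ℕ) + 1 := by
    have := (Fin.le_def.mp hba); omega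
  have hk2y : (b : ℕ) + 1 ≤ y := b.isLt
  have hk1y : (a : ℕ) ≤ y := le_of_lt a.isLt
  have hPmono : Pre y (a : ℕ) ⊆ Pre y ((b : ℕ) + 1) := by
    intro i hi
    simp only [Pre, Finset.mem_filter, Finset.mem_univ, true_and] at hi ⊢
    omega
  have hIcc : X ∩ Finset.Icc a b = (X ∩ Pre y ((b : ℕ) + 1)) \ (X ∩ Pre y (a : ℕ)) := by
    ext i
    simp only [Finset.mem_inter, Finset.mem_sdiff, Finset.mem_Icc, Pre,
      Finset.mem_filter, Finset.mem_univ, true_and]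
    constructor
    · rintro ⟨hiX, hai, hib⟩
      have h1 : (a : ℕ) ≤ (i : ℕ) := Fin.le_def.mp hai
      have h2 : (i : ℕ) ≤ (b : ℕ) := Fin.le_def.mp hib
      exact ⟨⟨hiX, by omega⟩, by rintro ⟨-, hlt⟩; omega⟩
    · rintro ⟨⟨hiX, hlt2⟩, hn⟩
      have h1 : ¬ (i : ℕ) < (a : ℕ) := fun h => hn ⟨hiX, h⟩
      exact ⟨hiX, Fin.le_def.mpr (by omega), Fin.le_def.mpr (by omega)⟩
  have hsub : X ∩ Pre y (a : ℕ) ⊆ X ∩ Pre y ((b : ℕ) + 1) :=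
    Finset.inter_subset_inter le_rfl hPmono
  have hle : S y (a : ℕ) X ≤ S y ((b : ℕ) + 1) X := Finset.card_le_card hsub
  have hcard : (X ∩ Finset.Icc a b).card = S y ((b : ℕ) + 1) X - S y (a : ℕ) X := by
    rw [hIcc, Finset.card_sdiff_of_subset hsub]; rfl
  have hIccCard : (Finset.Icc a b).card = (b : ℕ) + 1 - (a : ℕ) := by
    rw [Fin.card_Icc]
  have hcast1 : ((X ∩ Finset.Icc a b).card : ℝ)
      = (S y ((b : ℕ) + 1) X : ℝ) - S y (a : ℕ) X := by
    rw [hcard]; exact Nat.cast_sub hle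
  have hcast2 : ((Finset.Icc a b).card : ℝ) = (((b : ℕ) + 1 : ℕ) : ℝ) - (a : ℕ) := by
    rw [hIccCard]; exact Nat.cast_sub (le_of_lt hk12)
  rw [hcast1, hcast2] at hab
  have hab' : U ≤ |((S y ((b : ℕ) + 1) X : ℝ) - ((b : ℕ) + 1 : ℕ) * (x : ℝ) / y)
      - ((S y (a : ℕ) X : ℝ) - (a : ℕ) * (x : ℝ) / y)| := by
    have heq : (S y ((b : ℕ) + 1) X : ℝ) - S y (a : ℕ) X
        - ((((b : ℕ) + 1 : ℕ) : ℝ) - (a : ℕ)) * (x : ℝ) / y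
        = ((S y ((b : ℕ) + 1) X : ℝ) - ((b : ℕ) + 1 : ℕ) * (x : ℝ) / y)
          - ((S y (a : ℕ) X : ℝ) - (a : ℕ) * (x : ℝ) / y) := by ring
    rwa [heq] at hab
  by_cases h1 : U / 2 ≤ |(S y (a : ℕ) X : ℝ) - (a : ℕ) * (x : ℝ) / y|
  · exact main (a : ℕ) hk1y h1
  · apply main ((b : ℕ) + 1) hk2y
    push_neg at h1
    have habs := abs_sub ((S y ((b : ℕ) + 1) X : ℝ) - ((b : ℕ) + 1 : ℕ) * (x : ℝ) / y)
      ((S y (a : ℕ) X : ℝ) - (a : ℕ) * (x : ℝ) / y)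
    push_cast at hab' habs ⊢
    linarith

lemma hit_bound (x y : ℕ) (hx : 0 < x) (hxy : x ≤ y) (hy : 2 ≤ y)
    (σ : ℝ) (hσ : σ = 1 ∨ σ = -1) (t lam : ℝ) (ht : 0 < t) (hlam : 0 < lam)
    (hlam3 : lam * 3 ≤ 1) :
    (((powersetCard x (univ : Finset (Fin y))).filter (Hit x y t σ)).card : ℝ)
      ≤ Real.exp (-(lam * t) + lam ^ 2 * (18 * x)) * (y.choose x : ℝ) := by
  have h := main_ind x y hx hxy hy σ hσ t lam ht hlam hlam3 ((y + 1) / 2) 0 (Nat.zero_add _) ∅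
    (Finset.empty_subset _) (by simp) (by simpa)
  have hfeq : ((powersetCard x (univ : Finset (Fin y))).filter
      (fun X => X ∩ Pre y 0 = ∅ ∧ ∃ k, 0 ≤ k ∧ k ≤ (y + 1) / 2 ∧
        t ≤ σ * M x y k (S y k X)))
      = (powersetCard x (univ : Finset (Fin y))).filter (Hit x y t σ) := by
    apply Finset.filter_congr
    intro X _
    have hP0 : Pre y 0 = ∅ := by
      ext i; simp [Pre]
    simp [Hit, hP0]
  rw [hfeq] at h
  refine le_trans h ?_
  apply mul_le_mul_of_nonneg_right _ (Nat.cast_nonneg _)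
  apply Real.exp_le_exp.mpr
  have hM0 : M x y 0 (∅ : Finset (Fin y)).card = 0 := by simp [M]
  rw [hM0]
  have hy0 : (0:ℝ) < y := by positivity
  have hxR : (0:ℝ) ≤ (x:ℝ) := Nat.cast_nonneg _
  have hKR : (((y+1)/2 : ℕ) : ℝ) ≤ (y : ℝ) := by exact_mod_cast (by omega : (y+1)/2 ≤ y)
  have hkey : (18 * (x:ℝ) / y) * (((y+1)/2 : ℕ) : ℝ) ≤ 18 * x := by
    rw [div_mul_eq_mul_div, div_le_iff₀ hy0]
    nlinarith [mul_le_mul_of_nonneg_left hKR (by positivity : (0:ℝ) ≤ 18*(x:ℝ))]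
  nlinarith [mul_le_mul_of_nonneg_left hkey (sq_nonneg lam)]


end Stmt8Aux

open Stmt8Aux


theorem stmt8 :
    ∃ c : ℝ, 0 < c ∧ ∀ x y : ℕ, 0 < x → x ≤ y → ∀ U : ℝ, 0 < U →
      (((Finset.powersetCard x (Finset.univ : Finset (Fin y))).filter
          (fun X => ∃ a b : Fin y,
            U ≤ |((X ∩ Finset.Icc a b).card : ℝ) -
                  ((Finset.Icc a b).card : ℝ) * (x : ℝ) / (y : ℝ)|)).card : ℝ)
          / (Nat.choose y x : ℝ)
        ≤ 8 * Real.exp (-c * U ^ 2 / (x : ℝ)) := by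
  refine ⟨1/288, by norm_num, ?_⟩
  intro x y hx hxy U hU
  have hy1 : 0 < y := by omega
  have hy0 : (0:ℝ) < y := by exact_mod_cast hy1
  have hx0 : (0:ℝ) < x := by exact_mod_cast hx
  have hchoose : (0:ℝ) < (Nat.choose y x : ℝ) := by exact_mod_cast Nat.choose_pos hxy
  rw [div_le_iff₀ hchoose]
  by_cases hUx : (x : ℝ) < U
  · have hemp : ((Finset.powersetCard x (Finset.univ : Finset (Fin y))).filter
        (fun X => ∃ a b : Fin y,
          U ≤ |((X ∩ Finset.Icc a b).card : ℝ) -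
                ((Finset.Icc a b).card : ℝ) * (x : ℝ) / (y : ℝ)|)) = ∅ := by
      apply Finset.filter_false_of_mem
      rintro X hX ⟨a, b, hab⟩
      rw [Finset.mem_powersetCard_univ] at hX
      have h1 : ((X ∩ Finset.Icc a b).card : ℝ) ≤ x := by
        exact_mod_cast hX ▸ Finset.card_le_card Finset.inter_subset_left
      have h1' : (0:ℝ) ≤ ((X ∩ Finset.Icc a b).card : ℝ) := Nat.cast_nonneg _
      have h2 : ((Finset.Icc a b).card : ℝ) ≤ y := by
        have := Finset.card_le_card (Finset.subset_univ (Finset.Icc a b))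
        rw [Finset.card_univ, Fintype.card_fin] at this
        exact_mod_cast this
      have h2' : (0:ℝ) ≤ ((Finset.Icc a b).card : ℝ) := Nat.cast_nonneg _
      have h3 : ((Finset.Icc a b).card : ℝ) * x / y ≤ x := by
        rw [div_le_iff₀ hy0]; nlinarith
      have h3' : (0:ℝ) ≤ ((Finset.Icc a b).card : ℝ) * x / y := by positivity
      have habs : |((X ∩ Finset.Icc a b).card : ℝ) -
          ((Finset.Icc a b).card : ℝ) * x / y| ≤ x :=
        abs_sub_le_iff.mpr ⟨by linarith, by linarith⟩
      linarith
    rw [hemp]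
    simp only [Finset.card_empty, Nat.cast_zero]
    positivity
  push_neg at hUx
  by_cases hxey : x = y
  · have hemp : ((Finset.powersetCard x (Finset.univ : Finset (Fin y))).filter
        (fun X => ∃ a b : Fin y,
          U ≤ |((X ∩ Finset.Icc a b).card : ℝ) -
                ((Finset.Icc a b).card : ℝ) * (x : ℝ) / (y : ℝ)|)) = ∅ := by
      apply Finset.filter_false_of_mem
      rintro X hX ⟨a, b, hab⟩
      rw [Finset.mem_powersetCard_univ] at hX
      have hXu : X = Finset.univ := by
        apply Finset.eq_univ_of_card
        rw [hX, hxey]; exact (Fintype.card_fin y).symm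
      rw [hXu, Finset.univ_inter, hxey] at hab
      have hcc : ((Finset.Icc a b).card : ℝ) * y / y = ((Finset.Icc a b).card : ℝ) := by
        field_simp
      rw [hcc] at hab
      simp at hab
      linarith
    rw [hemp]
    simp only [Finset.card_empty, Nat.cast_zero]
    positivity
  have hy2 : 2 ≤ y := by omega
  set t : ℝ := U / 2 with htdef
  set lam : ℝ := U / (72 * x) with hlamdef
  have ht : 0 < t := by rw [htdef]; linarith
  have hlam : 0 < lam := by rw [hlamdef]; positivity
  have hlam3 : lam * 3 ≤ 1 := by
    rw [hlamdef, div_mul_eq_mul_div, div_le_one (by positivity)]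
    nlinarith
  -- union bound
  have hsubset : ((Finset.powersetCard x (Finset.univ : Finset (Fin y))).filter
        (fun X => ∃ a b : Fin y,
          U ≤ |((X ∩ Finset.Icc a b).card : ℝ) -
                ((Finset.Icc a b).card : ℝ) * (x : ℝ) / (y : ℝ)|))
      ⊆ ((Finset.powersetCard x (Finset.univ : Finset (Fin y))).filter
        (fun X => Hit x y t 1 X ∨ Hit x y t (-1) X ∨
          Hit x y t 1 (X.image Fin.rev) ∨ Hit x y t (-1) (X.image Fin.rev))) := by
    intro X hXf
    rw [Finset.mem_filter] at hXf ⊢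
    refine ⟨hXf.1, ?_⟩
    exact event_implies x y hx hxy hy2 U hU X
      (Finset.mem_powersetCard_univ.mp hXf.1) hXf.2
  have hcard4 : ((Finset.powersetCard x (Finset.univ : Finset (Fin y))).filter
        (fun X => Hit x y t 1 X ∨ Hit x y t (-1) X ∨
          Hit x y t 1 (X.image Fin.rev) ∨ Hit x y t (-1) (X.image Fin.rev))).card
      ≤ ((Finset.powersetCard x (Finset.univ : Finset (Fin y))).filter (Hit x y t 1)).card
        + ((Finset.powersetCard x (Finset.univ : Finset (Fin y))).filter (Hit x y t (-1))).card
        + ((Finset.powersetCard x (Finset.univ : Finset (Fin y))).filter (Hit x y t 1)).card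
        + ((Finset.powersetCard x (Finset.univ : Finset (Fin y))).filter (Hit x y t (-1))).card := by
    rw [Finset.filter_or, Finset.filter_or, Finset.filter_or]
    refine le_trans (Finset.card_union_le _ _) ?_
    have h2 := Finset.card_union_le
      ((Finset.powersetCard x (Finset.univ : Finset (Fin y))).filter (Hit x y t (-1)))
      (((Finset.powersetCard x (Finset.univ : Finset (Fin y))).filter
          (fun X => Hit x y t 1 (X.image Fin.rev)))
        ∪ ((Finset.powersetCard x (Finset.univ : Finset (Fin y))).filter
          (fun X => Hit x y t (-1) (X.image Fin.rev))))
    have h3 := Finset.card_union_le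
      ((Finset.powersetCard x (Finset.univ : Finset (Fin y))).filter
        (fun X => Hit x y t 1 (X.image Fin.rev)))
      ((Finset.powersetCard x (Finset.univ : Finset (Fin y))).filter
        (fun X => Hit x y t (-1) (X.image Fin.rev)))
    have hr1 := card_filter_rev x y (Hit x y t 1)
    have hr2 := card_filter_rev x y (Hit x y t (-1))
    omega
  have hb1 := hit_bound x y hx hxy hy2 1 (Or.inl rfl) t lam ht hlam hlam3
  have hb2 := hit_bound x y hx hxy hy2 (-1) (Or.inr rfl) t lam ht hlam hlam3
  have htotal : (((Finset.powersetCard x (Finset.univ : Finset (Fin y))).filter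
        (fun X => ∃ a b : Fin y,
          U ≤ |((X ∩ Finset.Icc a b).card : ℝ) -
                ((Finset.Icc a b).card : ℝ) * (x : ℝ) / (y : ℝ)|)).card : ℝ)
      ≤ 4 * (Real.exp (-(lam * t) + lam ^ 2 * (18 * x)) * (y.choose x : ℝ)) := by
    have hc := Finset.card_le_card hsubset
    have : (((Finset.powersetCard x (Finset.univ : Finset (Fin y))).filter
        (fun X => ∃ a b : Fin y,
          U ≤ |((X ∩ Finset.Icc a b).card : ℝ) -
                ((Finset.Icc a b).card : ℝ) * (x : ℝ) / (y : ℝ)|)).card : ℝ)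
        ≤ (((Finset.powersetCard x (Finset.univ : Finset (Fin y))).filter (Hit x y t 1)).card : ℝ)
          + (((Finset.powersetCard x (Finset.univ : Finset (Fin y))).filter (Hit x y t (-1))).card : ℝ)
          + (((Finset.powersetCard x (Finset.univ : Finset (Fin y))).filter (Hit x y t 1)).card : ℝ)
          + (((Finset.powersetCard x (Finset.univ : Finset (Fin y))).filter (Hit x y t (-1))).card : ℝ) := by
      exact_mod_cast le_trans hc hcard4
    linarith
  refine le_trans htotal ?_
  have hexp_eq : -(lam * t) + lam ^ 2 * (18 * x) = -(1/288) * U ^ 2 / x := by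
    rw [hlamdef, htdef]
    field_simp
    ring
  rw [hexp_eq]
  have hEpos : (0:ℝ) < Real.exp (-(1/288) * U ^ 2 / x) := Real.exp_pos _
  nlinarith [mul_pos hEpos hchoose]
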